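/- Let μ > 0 with μ ≠ 4. Let F_μ be the lift of the standard map and let G_μ : ℝ² → ℝ² be its inverse, G_μ(w₁,w₂) = (w₁ − w₂, w₂ − (μ/(2π))·sin(2π(w₁ − w₂))). Then the principal fixed point p = (0,0) of the standard map on the torus has a homoclinic point: there exists z ∈ ℝ² with z ∉ ℤ × ℤ such that the Euclidean infimum distance from the n-th iterate F_μ^[n](z) to the set ℤ × ℤ tends to 0 as n → ∞, and the Euclidean infimum distance from G_μ^[n](z) to ℤ × ℤ tends to 0 as n → ∞. -/

import Mathlib

open Real Filter Set
open scoped ENNReal Topology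

/-- The lift of the standard map to the plane. -/
noncomputable def stdLift (μ : ℝ) : ℝ × ℝ → ℝ × ℝ := fun p =>
  (p.1 + p.2 + μ / (2 * Real.pi) * Real.sin (2 * Real.pi * p.1),
   p.2 + μ / (2 * Real.pi) * Real.sin (2 * Real.pi * p.1))

/-- The inverse of the lift of the standard map. -/
noncomputable def stdLiftInv (μ : ℝ) : ℝ × ℝ → ℝ × ℝ := fun w =>
  (w.1 - w.2, w.2 - μ / (2 * Real.pi) * Real.sin (2 * Real.pi * (w.1 - w.2)))

/-- The integer lattice ℤ × ℤ inside ℝ². -/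
def intLattice : Set (ℝ × ℝ) := {z | ∃ m n : ℤ, z = ((m : ℝ), (n : ℝ))}

/-- The Euclidean infimum distance from a point of ℝ² to the integer lattice. -/
noncomputable def distToLattice (z : ℝ × ℝ) : ℝ :=
  ⨅ p : ℤ × ℤ, Real.sqrt ((z.1 - p.1) ^ 2 + (z.2 - p.2) ^ 2)

namespace StdHomo

variable (μ : ℝ)

noncomputable def kpar : ℝ := μ / (2 * Real.pi)
noncomputable def cpar : ℝ := μ / (2 * Real.pi) ^ 2

noncomputable def tterm (x : ℤ → ℝ) (n : ℤ) : ℝ :=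
  (x (n + 1) - x n) ^ 2 / 2 + cpar μ * (1 - Real.cos (2 * Real.pi * x n))

noncomputable def En (x : ℤ → ℝ) : ℝ≥0∞ := ∑' n : ℤ, ENNReal.ofReal (tterm μ x n)

noncomputable def lo (n : ℤ) : ℝ := if n ≤ 0 then 0 else 1 / 2
noncomputable def hi (n : ℤ) : ℝ := if n ≤ 0 then 1 / 2 else 1

def K : Set (ℤ → ℝ) := Set.pi Set.univ fun n => Set.Icc (lo n) (hi n)

variable {μ}

lemma cpar_pos (hμ : 0 < μ) : 0 < cpar μ := by
  have := Real.pi_pos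
  unfold cpar; positivity

lemma tterm_nonneg (hμ : 0 < μ) (x : ℤ → ℝ) (n : ℤ) : 0 ≤ tterm μ x n := by
  have h1 : Real.cos (2 * Real.pi * x n) ≤ 1 := Real.cos_le_one _
  have := cpar_pos (μ := μ) hμ
  unfold tterm
  nlinarith [sq_nonneg (x (n+1) - x n)]

lemma mem_K_iff {x : ℤ → ℝ} : x ∈ K ↔ ∀ n, lo n ≤ x n ∧ x n ≤ hi n := by
  constructor
  · intro h n; exact h n (Set.mem_univ n)
  · intro h n _; exact h n

lemma lo_lt_hi (n : ℤ) : lo n < hi n := by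
  unfold lo hi; split <;> norm_num

lemma K_bounds {x : ℤ → ℝ} (hx : x ∈ K) (n : ℤ) : 0 ≤ x n ∧ x n ≤ 1 := by
  rw [mem_K_iff] at hx
  rcases hx n with ⟨h1, h2⟩
  unfold lo hi at *
  constructor
  · split at h1 <;> [exact h1; linarith]
  · split at h2 <;> [linarith; exact h2]

lemma K_le_half {x : ℤ → ℝ} (hx : x ∈ K) {n : ℤ} (hn : n ≤ 0) : x n ≤ 1 / 2 := by
  rw [mem_K_iff] at hx
  have := (hx n).2
  unfold hi at this; rw [if_pos hn] at this; exact this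

lemma K_half_le {x : ℤ → ℝ} (hx : x ∈ K) {n : ℤ} (hn : 1 ≤ n) : 1 / 2 ≤ x n := by
  rw [mem_K_iff] at hx
  have := (hx n).1
  unfold lo at this; rw [if_neg (by omega)] at this; exact this



noncomputable def step : ℤ → ℝ := fun n => if n ≤ 0 then 0 else 1

lemma step_mem_K : step ∈ K := by
  rw [mem_K_iff]
  intro n
  unfold step lo hi
  split <;> norm_num

lemma tterm_step (hμ : 0 < μ) (n : ℤ) : tterm μ step n = if n = 0 then 1/2 else 0 := by
  unfold tterm step
  by_cases h : n = 0
  · subst h; norm_num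
  · rw [if_neg h]
    by_cases h2 : n ≤ 0
    · have h3 : n + 1 ≤ 0 := by omega
      rw [if_pos h2, if_pos h3]
      simp
    · have h3 : ¬ (n + 1 ≤ 0) := by omega
      rw [if_neg h2, if_neg h3]
      simp [Real.cos_two_pi]

lemma En_step (hμ : 0 < μ) : En μ step = ENNReal.ofReal (1/2) := by
  unfold En
  rw [tsum_eq_single (0 : ℤ)]
  · rw [tterm_step hμ]; norm_num
  · intro b hb; rw [tterm_step hμ, if_neg hb]; simp

lemma isCompact_K : IsCompact K := isCompact_univ_pi fun n => isCompact_Icc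

lemma isClosed_K : IsClosed K := isClosed_set_pi fun n _ => isClosed_Icc

lemma continuous_tterm (n : ℤ) : Continuous fun x : ℤ → ℝ => ENNReal.ofReal (tterm μ x n) := by
  apply ENNReal.continuous_ofReal.comp
  unfold tterm
  exact (((continuous_apply (n+1)).sub (continuous_apply n)).pow 2).div_const 2 |>.add
    (continuous_const.mul (continuous_const.sub
      (Real.continuous_cos.comp (continuous_const.mul (continuous_apply n)))))

lemma lsc_En : LowerSemicontinuous (En μ) :=
  lowerSemicontinuous_tsum fun n => (continuous_tterm n).lowerSemicontinuous

lemma exists_min (hμ : 0 < μ) : ∃ x ∈ K, (∀ y ∈ K, En μ x ≤ En μ y) := by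
  set m := sInf (En μ '' K) with hm
  have hmem : En μ step ∈ En μ '' K := ⟨step, step_mem_K, rfl⟩
  have hm_ne_top : m ≠ ⊤ := by
    intro h
    have := sInf_le hmem
    rw [← hm, h, top_le_iff] at this
    rw [En_step hμ] at this
    exact ENNReal.ofReal_ne_top this
  set C : ℕ → Set (ℤ → ℝ) := fun j => {x ∈ K | En μ x ≤ m + ((j : ℝ≥0∞) + 1)⁻¹} with hC
  have hCsub : ∀ j, C (j+1) ⊆ C j := by
    intro j x hx
    refine ⟨hx.1, hx.2.trans (add_le_add_right ?_ m)⟩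
    apply ENNReal.inv_le_inv.2
    push_cast
    exact add_le_add_left (le_self_add) 1
  have hCne : ∀ j, (C j).Nonempty := by
    intro j
    have hpos : (0 : ℝ≥0∞) < ((j : ℝ≥0∞) + 1)⁻¹ :=
      ENNReal.inv_pos.2 (ENNReal.add_ne_top.2 ⟨ENNReal.natCast_ne_top j, ENNReal.one_ne_top⟩)
    have hlt : m < m + ((j : ℝ≥0∞) + 1)⁻¹ :=
      ENNReal.lt_add_right hm_ne_top (ne_of_gt hpos)
    obtain ⟨a, ha, halt⟩ := sInf_lt_iff.mp hlt
    obtain ⟨y, hy, rfl⟩ := ha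
    exact ⟨y, hy, le_of_lt halt⟩
  have hCcl : ∀ j, IsClosed (C j) := by
    intro j
    exact isClosed_K.inter (lsc_En.isClosed_preimage _)
  have hCco : IsCompact (C 0) := isCompact_K.of_isClosed_subset (hCcl 0) (fun x hx => hx.1)
  obtain ⟨x, hx⟩ :=
    IsCompact.nonempty_iInter_of_sequence_nonempty_isCompact_isClosed C hCsub hCne hCco hCcl
  have hxK : x ∈ K := (Set.mem_iInter.mp hx 0).1
  refine ⟨x, hxK, fun y hy => ?_⟩
  have hxm : En μ x ≤ m := by
    have h1 : ∀ j : ℕ, En μ x ≤ m + ((j:ℝ≥0∞)+1)⁻¹ := fun j => (Set.mem_iInter.mp hx j).2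
    refine ENNReal.le_of_forall_pos_le_add fun ε hε hmt => ?_
    obtain ⟨j, hj⟩ := ENNReal.exists_inv_nat_lt
      (show ((ε:ℝ≥0∞)) ≠ 0 by exact_mod_cast hε.ne')
    refine (h1 j).trans (add_le_add_right ?_ m)
    calc ((j:ℝ≥0∞)+1)⁻¹ ≤ ((j:ℝ≥0∞))⁻¹ := ENNReal.inv_le_inv.2 le_self_add
    _ ≤ ε := hj.le
  exact hxm.trans (sInf_le ⟨y, hy, rfl⟩)



noncomputable def Del (μ : ℝ) (x : ℤ → ℝ) (n : ℤ) : ℝ :=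
  2 * x n - x (n + 1) - x (n - 1) + kpar μ * Real.sin (2 * Real.pi * x n)

lemma tterm_update_left (x : ℤ → ℝ) (n : ℤ) (v : ℝ) :
    tterm μ (Function.update x n v) (n - 1)
      = (v - x (n - 1)) ^ 2 / 2 + cpar μ * (1 - Real.cos (2 * Real.pi * x (n - 1))) := by
  unfold tterm
  rw [show (n - 1 + 1 : ℤ) = n by ring]
  rw [Function.update_self, Function.update_of_ne (by omega)]

lemma tterm_update_right (x : ℤ → ℝ) (n : ℤ) (v : ℝ) :
    tterm μ (Function.update x n v) n
      = (x (n + 1) - v) ^ 2 / 2 + cpar μ * (1 - Real.cos (2 * Real.pi * v)) := by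
  unfold tterm
  rw [Function.update_self, Function.update_of_ne (by omega)]

lemma update_mem_K {x : ℤ → ℝ} (hx : x ∈ K) {n : ℤ} {v : ℝ}
    (hv : v ∈ Set.Icc (lo n) (hi n)) : Function.update x n v ∈ K := by
  rw [mem_K_iff] at hx ⊢
  intro m
  by_cases h : m = n
  · subst h; rw [Function.update_self]; exact ⟨hv.1, hv.2⟩
  · rw [Function.update_of_ne h]; exact hx m

lemma tterm_pair_le (hμ : 0 < μ) {x : ℤ → ℝ} (hxK : x ∈ K)
    (hmin : ∀ y ∈ K, En μ x ≤ En μ y) (n : ℤ) {v : ℝ} (hv : v ∈ Set.Icc (lo n) (hi n)) :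
    tterm μ x n + tterm μ x (n - 1)
      ≤ tterm μ (Function.update x n v) n + tterm μ (Function.update x n v) (n - 1) := by
  have hyK : Function.update x n v ∈ K := update_mem_K hxK hv
  have hEn : En μ x ≤ En μ (Function.update x n v) := hmin _ hyK
  have hdec : ∀ z : ℤ → ℝ, En μ z = ENNReal.ofReal (tterm μ z n) + ENNReal.ofReal (tterm μ z (n - 1))
      + ∑' m : ℤ, (if m = n - 1 then 0 else if m = n then 0 else ENNReal.ofReal (tterm μ z m)) := by
    intro z
    rw [En, ENNReal.tsum_eq_add_tsum_ite n, ENNReal.tsum_eq_add_tsum_ite (n - 1),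
      if_neg (show ¬((n : ℤ) - 1 = n) by omega), add_assoc]
    refine congrArg₂ _ rfl (congrArg₂ _ rfl (tsum_congr fun m => ?_))
    split_ifs <;> rfl
  have hhxy : ∀ m : ℤ, (if m = n - 1 then 0 else if m = n then 0
        else ENNReal.ofReal (tterm μ (Function.update x n v) m))
      = (if m = n - 1 then 0 else if m = n then 0 else ENNReal.ofReal (tterm μ x m)) := by
    intro m
    by_cases h1 : m = n - 1
    · simp [h1]
    · by_cases h2 : m = n
      · simp [h1, h2]
      · rw [if_neg h1, if_neg h2, if_neg h1, if_neg h2]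
        congr 1
        unfold tterm
        rw [Function.update_of_ne h2, Function.update_of_ne (show m + 1 ≠ n by omega)]
  have hR_ne : (∑' m : ℤ, (if m = n - 1 then 0 else if m = n then 0
      else ENNReal.ofReal (tterm μ x m))) ≠ ⊤ := by
    have hle : (∑' m : ℤ, (if m = n - 1 then 0 else if m = n then 0
        else ENNReal.ofReal (tterm μ x m))) ≤ En μ x := by
      rw [En]
      apply ENNReal.tsum_le_tsum
      intro m
      by_cases h1 : m = n - 1
      · simp [h1]
      · by_cases h2 : m = n
        · simp [h1, h2]
        · rw [if_neg h1, if_neg h2]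
    intro htop
    rw [htop, top_le_iff] at hle
    have := hmin step step_mem_K
    rw [hle, En_step hμ, top_le_iff] at this
    exact ENNReal.ofReal_ne_top this
  have hkey : ENNReal.ofReal (tterm μ x n) + ENNReal.ofReal (tterm μ x (n - 1))
      ≤ ENNReal.ofReal (tterm μ (Function.update x n v) n)
        + ENNReal.ofReal (tterm μ (Function.update x n v) (n - 1)) := by
    have h := hEn
    rw [hdec x, hdec (Function.update x n v), tsum_congr hhxy] at h
    exact (ENNReal.add_le_add_iff_right hR_ne).mp h
  rw [← ENNReal.ofReal_add (tterm_nonneg hμ x n) (tterm_nonneg hμ x (n - 1)),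
    ← ENNReal.ofReal_add (tterm_nonneg hμ _ n) (tterm_nonneg hμ _ (n - 1))] at hkey
  exact (ENNReal.ofReal_le_ofReal_iff
    (add_nonneg (tterm_nonneg hμ _ _) (tterm_nonneg hμ _ _))).mp hkey

noncomputable def Phi (μ : ℝ) (x : ℤ → ℝ) (n : ℤ) : ℝ → ℝ := fun v =>
  (v - x (n - 1)) ^ 2 / 2 + (x (n + 1) - v) ^ 2 / 2 + cpar μ * (1 - Real.cos (2 * Real.pi * v))

lemma Phi_min (hμ : 0 < μ) {x : ℤ → ℝ} (hxK : x ∈ K)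
    (hmin : ∀ y ∈ K, En μ x ≤ En μ y) (n : ℤ) {v : ℝ} (hv : v ∈ Set.Icc (lo n) (hi n)) :
    Phi μ x n (x n) ≤ Phi μ x n v := by
  have h := tterm_pair_le hμ hxK hmin n hv
  rw [tterm_update_left, tterm_update_right] at h
  unfold tterm Phi at *
  rw [show (n - 1 + 1 : ℤ) = n by ring] at h
  linarith

lemma cpar_mul_two_pi : cpar μ * (2 * Real.pi) = kpar μ := by
  unfold cpar kpar
  have := Real.pi_ne_zero
  field_simp

lemma hasDerivAt_Phi (x : ℤ → ℝ) (n : ℤ) :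
    HasDerivAt (Phi μ x n) (Del μ x n) (x n) := by
  have h1 : HasDerivAt (fun v : ℝ => (v - x (n - 1)) ^ 2 / 2)
      ((2 * (x n - x (n - 1)) ^ 1 * 1) / 2) (x n) :=
    (((hasDerivAt_id (x n)).sub_const (x (n - 1))).pow 2).div_const 2
  have h2 : HasDerivAt (fun v : ℝ => (x (n + 1) - v) ^ 2 / 2)
      ((2 * (x (n + 1) - x n) ^ 1 * (0 - 1)) / 2) (x n) :=
    (((hasDerivAt_const (x n) (x (n + 1))).sub (hasDerivAt_id (x n))).pow 2).div_const 2
  have h3 : HasDerivAt (fun v : ℝ => 2 * Real.pi * v) (2 * Real.pi) (x n) := by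
    simpa using (hasDerivAt_id (x n)).const_mul (2 * Real.pi)
  have hcos : HasDerivAt (fun v : ℝ => Real.cos (2 * Real.pi * v))
      (-Real.sin (2 * Real.pi * x n) * (2 * Real.pi)) (x n) :=
    (Real.hasDerivAt_cos (2 * Real.pi * x n)).comp (x n) h3
  have h4 : HasDerivAt (fun v : ℝ => cpar μ * (1 - Real.cos (2 * Real.pi * v)))
      (cpar μ * (0 - -Real.sin (2 * Real.pi * x n) * (2 * Real.pi))) (x n) :=
    ((hasDerivAt_const (x n) (1 : ℝ)).sub hcos).const_mul (cpar μ)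
  have := (h1.add h2).add h4
  refine HasDerivAt.congr_deriv this ?_
  unfold Del
  rw [← cpar_mul_two_pi]
  ring

lemma deriv_nonneg_right {φ : ℝ → ℝ} {a b d : ℝ} (hd : HasDerivAt φ d a) (hab : a < b)
    (hmin : ∀ v ∈ Set.Icc a b, φ a ≤ φ v) : 0 ≤ d := by
  have h1 : HasDerivWithinAt φ d (Set.Ioi a) a := hd.hasDerivWithinAt
  rw [hasDerivWithinAt_iff_tendsto_slope,
    Set.diff_singleton_eq_self (Set.notMem_Ioi.mpr (le_refl a))] at h1
  refine ge_of_tendsto h1 ?_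
  filter_upwards [Ioc_mem_nhdsGT_of_mem (Set.mem_Ico.mpr ⟨le_refl a, hab⟩)] with v hv
  have hle := hmin v ⟨le_of_lt hv.1, hv.2⟩
  rw [slope_def_field]
  exact div_nonneg (by linarith) (by linarith [hv.1])

lemma deriv_nonpos_left {φ : ℝ → ℝ} {a b d : ℝ} (hd : HasDerivAt φ d b) (hab : a < b)
    (hmin : ∀ v ∈ Set.Icc a b, φ b ≤ φ v) : d ≤ 0 := by
  have h1 : HasDerivWithinAt φ d (Set.Iio b) b := hd.hasDerivWithinAt
  rw [hasDerivWithinAt_iff_tendsto_slope,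
    Set.diff_singleton_eq_self (Set.notMem_Iio.mpr (le_refl b))] at h1
  refine le_of_tendsto h1 ?_
  filter_upwards [Ico_mem_nhdsLT_of_mem (Set.mem_Ioc.mpr ⟨hab, le_refl b⟩)] with v hv
  have hle := hmin v ⟨hv.1, le_of_lt hv.2⟩
  rw [slope_def_field]
  exact div_nonpos_of_nonneg_of_nonpos (by linarith) (by linarith [hv.2])

lemma Del_sign (hμ : 0 < μ) {x : ℤ → ℝ} (hxK : x ∈ K)
    (hmin : ∀ y ∈ K, En μ x ≤ En μ y) (n : ℤ) :
    (x n < hi n → 0 ≤ Del μ x n) ∧ (lo n < x n → Del μ x n ≤ 0) := by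
  have hmem := (mem_K_iff.mp hxK) n
  have hD : HasDerivAt (Phi μ x n) (Del μ x n) (x n) := hasDerivAt_Phi x n
  constructor
  · intro hlt
    refine deriv_nonneg_right hD hlt fun v hv => ?_
    exact Phi_min hμ hxK hmin n ⟨le_trans hmem.1 hv.1, hv.2⟩
  · intro hlt
    refine deriv_nonpos_left hD hlt fun v hv => ?_
    exact Phi_min hμ hxK hmin n ⟨hv.1, le_trans hv.2 hmem.2⟩

lemma En_shift (x : ℤ → ℝ) (j : ℤ) : En μ (fun m => x (m + j)) = En μ x := by
  unfold En
  calc ∑' m : ℤ, ENNReal.ofReal (tterm μ (fun m' => x (m' + j)) m)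
      = ∑' m : ℤ, ENNReal.ofReal (tterm μ x (m + j)) := by
        apply tsum_congr
        intro m
        congr 1
        show (x (m + 1 + j) - x (m + j)) ^ 2 / 2
              + cpar μ * (1 - Real.cos (2 * Real.pi * x (m + j)))
            = (x (m + j + 1) - x (m + j)) ^ 2 / 2
              + cpar μ * (1 - Real.cos (2 * Real.pi * x (m + j)))
        rw [show (m + 1 + j : ℤ) = m + j + 1 by ring]
    _ = _ := by
        simpa using Equiv.tsum_eq (Equiv.addRight j) (fun m => ENNReal.ofReal (tterm μ x m))

lemma sin_two_pi_half : Real.sin (2 * Real.pi * (1 / 2)) = 0 := by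
  rw [show 2 * Real.pi * (1 / 2) = Real.pi by ring, Real.sin_pi]

lemma EL (hμ : 0 < μ) {x : ℤ → ℝ} (hxK : x ∈ K)
    (hmin : ∀ y ∈ K, En μ x ≤ En μ y) (n : ℤ) : Del μ x n = 0 := by
  have hb := mem_K_iff.mp hxK n
  have hsign := Del_sign hμ hxK hmin n
  rcases eq_or_lt_of_le hb.1 with hlo | hlo
  · -- x n = lo n
    have h1 : 0 ≤ Del μ x n := hsign.1 (hlo ▸ lo_lt_hi n)
    by_cases hn : n ≤ 0
    · -- lo n = 0, x n = 0
      have hx0 : x n = 0 := by rw [← hlo]; unfold lo; rw [if_pos hn]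
      have hDel : Del μ x n = -x (n + 1) - x (n - 1) := by
        unfold Del
        rw [hx0]
        norm_num
      by_cases hn' : n = 0
      · exfalso
        have h2 : 1 / 2 ≤ x (n + 1) := K_half_le hxK (by omega)
        have h3 : 0 ≤ x (n - 1) := (K_bounds hxK _).1
        rw [hDel] at h1
        linarith
      · have h2 : 0 ≤ x (n + 1) := (K_bounds hxK _).1
        have h3 : 0 ≤ x (n - 1) := (K_bounds hxK _).1
        rw [hDel] at h1 ⊢
        linarith
    · -- n ≥ 1, lo n = 1/2, x n = 1/2
      have hx0 : x n = 1 / 2 := by rw [← hlo]; unfold lo; rw [if_neg hn]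
      have hDel : Del μ x n = 1 - x (n + 1) - x (n - 1) := by
        unfold Del
        rw [hx0, sin_two_pi_half]
        ring
      by_cases hn' : n = 1
      · -- n = 1 : shift trick
        subst hn'
        rcases eq_or_lt_of_le (by rw [hDel] at h1; linarith :
            x (1 + 1) + x (1 - 1) ≤ 1) with heq | hlt
        · rw [hDel]; linarith
        · exfalso
          set y : ℤ → ℝ := fun m => x (m + 1) with hy
          have hyK : y ∈ K := by
            rw [mem_K_iff]
            intro m
            constructor
            · unfold lo
              split
              · exact (K_bounds hxK _).1
              · exact K_half_le hxK (by omega)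
            · unfold hi
              split
              · rcases eq_or_lt_of_le (show m ≤ 0 by assumption) with h | h
                · rw [hy]; simp only [h]; norm_num [hx0]
                · exact K_le_half hxK (by omega)
              · exact (K_bounds hxK _).2
          have hminy : ∀ z ∈ K, En μ y ≤ En μ z := by
            intro z hz
            rw [hy, En_shift]
            exact hmin z hz
          have := (Del_sign hμ hyK hminy 0).2 (by
            rw [hy]
            simp only
            unfold lo
            rw [if_pos (le_refl (0:ℤ))]
            norm_num [hx0])
          unfold Del at this
          rw [hy] at this
          simp only at this
          norm_num [hx0, sin_two_pi_half] at this
          rw [show (1 + 1 : ℤ) = 2 by ring] at hlt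
          norm_num at hlt
          linarith [this, hlt]
      · have h2 : 1 / 2 ≤ x (n + 1) := K_half_le hxK (by omega)
        have h3 : 1 / 2 ≤ x (n - 1) := K_half_le hxK (by omega)
        rw [hDel] at h1 ⊢
        linarith
  · -- lo n < x n
    have h1 : Del μ x n ≤ 0 := hsign.2 hlo
    rcases eq_or_lt_of_le hb.2 with hhi | hhi
    swap
    · exact le_antisymm h1 (hsign.1 hhi)
    · -- x n = hi n
      by_cases hn : n ≤ 0
      · -- hi n = 1/2, x n = 1/2
        have hx0 : x n = 1 / 2 := by rw [hhi]; unfold hi; rw [if_pos hn]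
        have hDel : Del μ x n = 1 - x (n + 1) - x (n - 1) := by
          unfold Del
          rw [hx0, sin_two_pi_half]
          ring
        by_cases hn' : n = 0
        · subst hn'
          rcases eq_or_lt_of_le (by rw [hDel] at h1; linarith :
              (1:ℝ) ≤ x (0 + 1) + x (0 - 1)) with heq | hlt
          · rw [hDel]; linarith
          · exfalso
            set y : ℤ → ℝ := fun m => x (m - 1) with hy
            have hyK : y ∈ K := by
              rw [mem_K_iff]
              intro m
              constructor
              · unfold lo
                split
                · exact (K_bounds hxK _).1
                · rcases eq_or_lt_of_le (show (1:ℤ) ≤ m by omega) with h | h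
                  · rw [hy]; simp only [← h]; norm_num [hx0]
                  · exact K_half_le hxK (by omega)
              · unfold hi
                split
                · exact K_le_half hxK (by omega)
                · exact (K_bounds hxK _).2
            have hminy : ∀ z ∈ K, En μ y ≤ En μ z := by
              intro z hz
              have : y = fun m => x (m + (-1)) := by
                funext m
                rw [hy]
                norm_num [sub_eq_add_neg]
              rw [this, En_shift]
              exact hmin z hz
            have h5 := (Del_sign hμ hyK hminy 1).1 (by
              rw [hy]
              simp only
              unfold hi
              rw [if_neg (by omega)]
              norm_num [hx0])
            unfold Del at h5
            rw [hy] at h5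
            simp only at h5
            norm_num [hx0, sin_two_pi_half] at h5
            norm_num at hlt
            linarith [h5, hlt]
        · have h2 : x (n + 1) ≤ 1 / 2 := K_le_half hxK (by omega)
          have h3 : x (n - 1) ≤ 1 / 2 := K_le_half hxK (by omega)
          rw [hDel] at h1 ⊢
          linarith
      · -- n ≥ 1, hi n = 1, x n = 1
        have hx0 : x n = 1 := by rw [hhi]; unfold hi; rw [if_neg hn]
        have hDel : Del μ x n = 2 - x (n + 1) - x (n - 1) := by
          unfold Del
          rw [hx0, show (2 * Real.pi * (1:ℝ)) = 2 * Real.pi by ring, Real.sin_two_pi]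
          ring
        have h2 : x (n + 1) ≤ 1 := (K_bounds hxK _).2
        have h3 : x (n - 1) ≤ 1 := (K_bounds hxK _).2
        rw [hDel] at h1 ⊢
        linarith

lemma summable_tterm (hμ : 0 < μ) {x : ℤ → ℝ} (hfin : En μ x ≠ ⊤) :
    Summable (tterm μ x) := by
  have h1 : (∑' n : ℤ, ((tterm μ x n).toNNReal : ℝ≥0∞)) ≠ ⊤ := hfin
  have h2 : Summable fun n : ℤ => (tterm μ x n).toNNReal :=
    ENNReal.tsum_coe_ne_top_iff_summable.mp h1
  have h3 : Summable fun n : ℤ => ((tterm μ x n).toNNReal : ℝ) := NNReal.summable_coe.mpr h2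
  refine h3.congr fun n => ?_
  exact Real.coe_toNNReal _ (tterm_nonneg hμ x n)

lemma sq_dist_round_le (y : ℝ) :
    (y - (round y : ℝ)) ^ 2 ≤ (1 - Real.cos (2 * Real.pi * y)) / 8 := by
  obtain ⟨d, hd⟩ : ∃ d : ℝ, d = y - (round y : ℝ) := ⟨_, rfl⟩
  rw [← hd]
  have habs : |d| ≤ 1 / 2 := by rw [hd]; exact abs_sub_round y
  have hcos : Real.cos (2 * Real.pi * y) = Real.cos (2 * Real.pi * d) := by
    rw [show 2 * Real.pi * y = 2 * Real.pi * d + (round y : ℤ) * (2 * Real.pi) by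
        rw [hd]; push_cast; ring]
    exact Real.cos_add_int_mul_two_pi _ _
  have hsin2 : Real.cos (2 * Real.pi * d) = 1 - 2 * Real.sin (Real.pi * d) ^ 2 := by
    have h1 := Real.cos_two_mul' (Real.pi * d)
    have h2 := Real.sin_sq_add_cos_sq (Real.pi * d)
    rw [show 2 * Real.pi * d = 2 * (Real.pi * d) by ring]
    linarith
  have hjord : 2 * |d| ≤ Real.sin (Real.pi * |d|) := by
    have h0 : 0 ≤ Real.pi * |d| := by positivity
    have h1 : Real.pi * |d| ≤ Real.pi / 2 := by
      nlinarith [Real.pi_pos, abs_nonneg d]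
    have h2 := Real.mul_le_sin h0 h1
    have hpi := Real.pi_pos
    calc 2 * |d| = 2 / Real.pi * (Real.pi * |d|) := by field_simp
    _ ≤ _ := h2
  have hsq : Real.sin (Real.pi * d) ^ 2 = Real.sin (Real.pi * |d|) ^ 2 := by
    rcases abs_choice d with h | h
    · rw [h]
    · rw [h, show Real.pi * -d = -(Real.pi * d) by ring, Real.sin_neg, neg_sq]
  have h4 : 4 * d ^ 2 ≤ Real.sin (Real.pi * d) ^ 2 := by
    rw [hsq]
    have h5 : (2 * |d|) ^ 2 ≤ Real.sin (Real.pi * |d|) ^ 2 :=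
      pow_le_pow_left₀ (by positivity) hjord 2
    calc 4 * d ^ 2 = (2 * |d|) ^ 2 := by rw [mul_pow, sq_abs]; ring
    _ ≤ _ := h5
  rw [hcos, hsin2]
  linarith

lemma tendsto_tails (hμ : 0 < μ) {x : ℤ → ℝ} (hfin : En μ x ≠ ⊤) :
    Tendsto (fun m : ℤ => Real.sqrt ((x m - (round (x m) : ℝ)) ^ 2 + (x m - x (m - 1)) ^ 2))
      cofinite (𝓝 0) := by
  have hsum := summable_tterm hμ hfin
  have ht : Tendsto (tterm μ x) cofinite (𝓝 0) := hsum.tendsto_cofinite_zero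
  have hA : Tendsto (fun n : ℤ => (x (n + 1) - x n) ^ 2 / 2) cofinite (𝓝 0) := by
    refine squeeze_zero (fun n => by positivity) (fun n => ?_) ht
    unfold tterm
    have h1 : Real.cos (2 * Real.pi * x n) ≤ 1 := Real.cos_le_one _
    have h2 := cpar_pos (μ := μ) hμ
    nlinarith
  have hB : Tendsto (fun n : ℤ => cpar μ * (1 - Real.cos (2 * Real.pi * x n)))
      cofinite (𝓝 0) := by
    refine squeeze_zero (fun n => ?_) (fun n => ?_) ht
    · have h1 : Real.cos (2 * Real.pi * x n) ≤ 1 := Real.cos_le_one _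
      have h2 := cpar_pos (μ := μ) hμ
      nlinarith
    · unfold tterm
      nlinarith [sq_nonneg (x (n + 1) - x n)]
  have hC : Tendsto (fun n : ℤ => 1 - Real.cos (2 * Real.pi * x n)) cofinite (𝓝 0) := by
    have h2 := hB.const_mul ((cpar μ)⁻¹)
    rw [mul_zero] at h2
    refine h2.congr fun n => ?_
    rw [inv_mul_cancel_left₀ (cpar_pos (μ := μ) hμ).ne']
  have hsq1 : Tendsto (fun n : ℤ => (x n - (round (x n) : ℝ)) ^ 2) cofinite (𝓝 0) := by
    refine squeeze_zero (fun n => sq_nonneg _) (fun n => sq_dist_round_le (x n)) ?_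
    have := hC.div_const (8 : ℝ)
    rwa [zero_div] at this
  have hsq2 : Tendsto (fun n : ℤ => (x (n + 1) - x n) ^ 2) cofinite (𝓝 0) := by
    have h2 := hA.const_mul (2 : ℝ)
    rw [mul_zero] at h2
    refine h2.congr fun n => ?_
    ring
  have hsq2' : Tendsto (fun m : ℤ => (x m - x (m - 1)) ^ 2) cofinite (𝓝 0) := by
    have hinj : Function.Injective (fun m : ℤ => m - 1) := fun a b h => by
      simp only at h; omega
    have h3 := hsq2.comp hinj.tendsto_cofinite
    refine h3.congr fun m => ?_
    simp only [Function.comp_apply]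
    rw [show (m - 1 + 1 : ℤ) = m by ring]
  have hsum2 : Tendsto
      (fun m : ℤ => (x m - (round (x m) : ℝ)) ^ 2 + (x m - x (m - 1)) ^ 2) cofinite (𝓝 0) := by
    have := hsq1.add hsq2'
    rwa [add_zero] at this
  have hcont := (Real.continuous_sqrt.tendsto (0 : ℝ)).comp hsum2
  rw [Real.sqrt_zero] at hcont
  exact hcont.congr fun m => rfl

lemma stdLift_step {x : ℤ → ℝ}
    (hrec : ∀ n : ℤ, x (n + 1)
      = 2 * x n - x (n - 1) + μ / (2 * Real.pi) * Real.sin (2 * Real.pi * x n)) (m : ℤ) :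
    stdLift μ (x m, x m - x (m - 1)) = (x (m + 1), x (m + 1) - x m) := by
  unfold stdLift
  simp only [Prod.mk.injEq]
  constructor <;> linarith [hrec m]

lemma stdLiftInv_step {x : ℤ → ℝ}
    (hrec : ∀ n : ℤ, x (n + 1)
      = 2 * x n - x (n - 1) + μ / (2 * Real.pi) * Real.sin (2 * Real.pi * x n)) (m : ℤ) :
    stdLiftInv μ (x m, x m - x (m - 1)) = (x (m - 1), x (m - 1) - x (m - 2)) := by
  unfold stdLiftInv
  simp only
  rw [show x m - (x m - x (m - 1)) = x (m - 1) from by ring]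
  have h := hrec (m - 1)
  rw [show (m - 1 + 1 : ℤ) = m by ring, show (m - 1 - 1 : ℤ) = m - 2 by ring] at h
  simp only [Prod.mk.injEq]
  exact ⟨trivial, by linarith⟩

lemma iter_fwd {x : ℤ → ℝ}
    (hrec : ∀ n : ℤ, x (n + 1)
      = 2 * x n - x (n - 1) + μ / (2 * Real.pi) * Real.sin (2 * Real.pi * x n)) (j : ℕ) :
    (stdLift μ)^[j] (x 0, x 0 - x (-1)) = (x (j : ℤ), x (j : ℤ) - x ((j : ℤ) - 1)) := by
  induction j with
  | zero => norm_num
  | succ j ih =>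
    rw [Function.iterate_succ_apply', ih, stdLift_step hrec (j : ℤ),
      show ((j + 1 : ℕ) : ℤ) = (j : ℤ) + 1 from by push_cast; ring,
      show ((j : ℤ) + 1 - 1 : ℤ) = (j : ℤ) from by ring]

lemma iter_bwd {x : ℤ → ℝ}
    (hrec : ∀ n : ℤ, x (n + 1)
      = 2 * x n - x (n - 1) + μ / (2 * Real.pi) * Real.sin (2 * Real.pi * x n)) (j : ℕ) :
    (stdLiftInv μ)^[j] (x 0, x 0 - x (-1))
      = (x (-(j : ℤ)), x (-(j : ℤ)) - x (-(j : ℤ) - 1)) := by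
  induction j with
  | zero => norm_num
  | succ j ih =>
    rw [Function.iterate_succ_apply', ih, stdLiftInv_step hrec (-(j : ℤ)),
      show (-((j + 1 : ℕ) : ℤ)) = -(j : ℤ) - 1 from by push_cast; ring,
      show (-(j : ℤ) - 1 - 1 : ℤ) = -(j : ℤ) - 2 from by ring]

lemma distToLattice_le_pt (z : ℝ × ℝ) (p : ℤ × ℤ) :
    distToLattice z ≤ Real.sqrt ((z.1 - p.1) ^ 2 + (z.2 - p.2) ^ 2) := by
  apply ciInf_le
  refine ⟨0, ?_⟩
  rintro r ⟨q, rfl⟩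
  exact Real.sqrt_nonneg _

lemma distToLattice_nonneg (z : ℝ × ℝ) : 0 ≤ distToLattice z :=
  le_ciInf fun p => Real.sqrt_nonneg _

end StdHomo

/-- For `μ > 0`, `μ ≠ 4`, the principal fixed point `p = (0,0)` of the standard map on the
torus has a homoclinic point. -/
theorem stdMap_homoclinic_point (μ : ℝ) (hμ : 0 < μ) (hμ4 : μ ≠ 4) :
    ∃ z : ℝ × ℝ, z ∉ intLattice ∧
      Filter.Tendsto (fun n : ℕ => distToLattice ((stdLift μ)^[n] z))
        Filter.atTop (nhds 0) ∧
      Filter.Tendsto (fun n : ℕ => distToLattice ((stdLiftInv μ)^[n] z))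
        Filter.atTop (nhds 0) := by
  obtain ⟨x, hxK, hmin⟩ := StdHomo.exists_min hμ
  have hfin : StdHomo.En μ x ≠ ⊤ := by
    intro h
    have h2 := hmin StdHomo.step StdHomo.step_mem_K
    rw [h, top_le_iff, StdHomo.En_step hμ] at h2
    exact ENNReal.ofReal_ne_top h2
  have hEL := fun n => StdHomo.EL hμ hxK hmin n
  have hrec : ∀ n : ℤ, x (n + 1)
      = 2 * x n - x (n - 1) + μ / (2 * Real.pi) * Real.sin (2 * Real.pi * x n) := by
    intro n
    have h := hEL n
    unfold StdHomo.Del StdHomo.kpar at h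
    linarith
  have htail := StdHomo.tendsto_tails hμ hfin
  refine ⟨(x 0, x 0 - x (-1)), ?_, ?_, ?_⟩
  · rintro ⟨m, l, hz⟩
    have h1 : x 0 = (m : ℝ) := congrArg Prod.fst hz
    have h2 : x 0 - x (-1) = (l : ℝ) := congrArg Prod.snd hz
    have hb0 := (StdHomo.K_bounds hxK 0).1
    have hbh := StdHomo.K_le_half hxK (le_refl (0 : ℤ))
    have hm : m = 0 := by
      have hm0 : (0 : ℝ) ≤ (m : ℝ) := h1 ▸ hb0
      have hm1 : (m : ℝ) < 1 := by rw [← h1]; linarith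
      have hm0' : (0 : ℤ) ≤ m := by exact_mod_cast hm0
      have hm1' : m < 1 := by exact_mod_cast hm1
      omega
    have hx0 : x 0 = 0 := by rw [h1, hm]; norm_num
    have hxm1 : x (-1) = (-l : ℝ) := by push_cast; linarith
    have hl : l = 0 := by
      have hb1 := (StdHomo.K_bounds hxK (-1)).1
      have hb2 := StdHomo.K_le_half hxK (show (-1 : ℤ) ≤ 0 by omega)
      rw [hxm1] at hb1 hb2
      have h3 : (0 : ℤ) ≤ -l := by exact_mod_cast hb1
      have h4 : (-l : ℝ) < 1 := by linarith
      have h5 : -l < 1 := by exact_mod_cast h4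
      omega
    have hxm0 : x (-1) = 0 := by rw [hxm1, hl]; norm_num
    have h6 := hrec 0
    rw [show (0 : ℤ) - 1 = -1 by ring, hx0, hxm0] at h6
    norm_num [Real.sin_zero] at h6
    have h7 := StdHomo.K_half_le hxK (le_refl (1 : ℤ))
    rw [h6] at h7
    norm_num at h7
  · have hcast : Filter.Tendsto (fun j : ℕ => (j : ℤ)) Filter.atTop Filter.cofinite := by
      rw [← Nat.cofinite_eq_atTop]
      exact Function.Injective.tendsto_cofinite fun a b h => by exact_mod_cast h
    have hcomp := htail.comp hcast
    refine squeeze_zero (fun j => StdHomo.distToLattice_nonneg _) (fun j => ?_) hcomp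
    rw [StdHomo.iter_fwd hrec j]
    have h := StdHomo.distToLattice_le_pt (x (j : ℤ), x (j : ℤ) - x ((j : ℤ) - 1))
      (round (x (j : ℤ)), 0)
    simpa using h
  · have hcast : Filter.Tendsto (fun j : ℕ => -(j : ℤ)) Filter.atTop Filter.cofinite := by
      rw [← Nat.cofinite_eq_atTop]
      exact Function.Injective.tendsto_cofinite fun a b h => by
        simp only [neg_inj] at h; exact_mod_cast h
    have hcomp := htail.comp hcast
    refine squeeze_zero (fun j => StdHomo.distToLattice_nonneg _) (fun j => ?_) hcomp
    rw [StdHomo.iter_bwd hrec j]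
    have h := StdHomo.distToLattice_le_pt (x (-(j : ℤ)), x (-(j : ℤ)) - x (-(j : ℤ) - 1))
      (round (x (-(j : ℤ))), 0)
    simpa using h
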